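/- arXiv:math/0611812 — 7 statements merged into one kernel-verified Lean document; each statement's English description precedes it below -/
import Mathlib

section
/- The fibers of the Hopf map h(w) = conj(w) * i * w are the orbits of the one-parameter subgroup generated by i: for unit quaternions w and w', one has conj(w') * i * w' = conj(w) * i * w if and only if there exists θ ∈ ℝ such that w' = (Real.cos θ + Real.sin θ • i) * w. -/
open Quaternion

noncomputable section

/-- The quaternion imaginary unit `i`. -/
def qi : ℍ[ℝ] := ⟨0, 1, 0, 0⟩

/-- The fibers of the Hopf map `w ↦ conj w * i * w` are the orbits of the one-parameter
subgroup `e^{iθ} = cos θ + sin θ • i`. -/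
theorem hopf_fibers (w w' : ℍ[ℝ]) (hw : normSq w = 1) (hw' : normSq w' = 1) :
    star w' * qi * w' = star w * qi * w ↔
    ∃ θ : ℝ, w' = ((Real.cos θ : ℍ[ℝ]) + Real.sin θ • qi) * w := by
  constructor
  · intro h
    set u : ℍ[ℝ] := w' * star w with hu
    have hws : w * star w = 1 := by
      rw [Quaternion.self_mul_star, hw]; simp
    have hws' : w' * star w' = 1 := by
      rw [Quaternion.self_mul_star, hw']; simp
    have hsw : star w * w = 1 := by
      rw [Quaternion.star_mul_self, hw]; simp
    -- i * u = u * i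
    have hcomm : qi * u = u * qi := by
      have h2 : w' * (star w' * qi * w') * star w = w' * (star w * qi * w) * star w := by
        rw [h]
      have L : w' * (star w' * qi * w') * star w
          = (w' * star w') * (qi * (w' * star w)) := by simp only [mul_assoc]
      have R : w' * (star w * qi * w) * star w
          = (w' * star w) * (qi * (w * star w)) := by simp only [mul_assoc]
      rw [L, R, hws', hws, one_mul, mul_one] at h2
      rw [hu]; exact h2
    have hc : u.imJ = 0 ∧ u.imK = 0 := by
      have h1 := congrArg QuaternionAlgebra.imJ hcomm
      have h2 := congrArg QuaternionAlgebra.imK hcomm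
      simp [(show qi.re = 0 from rfl), (show qi.imI = 1 from rfl), (show qi.imJ = 0 from rfl), (show qi.imK = 0 from rfl), Quaternion.imJ_mul, Quaternion.imK_mul] at h1 h2
      constructor <;> linarith
    have hnu : u.re ^ 2 + u.imI ^ 2 = 1 := by
      have hnsq : normSq u = 1 := by
        rw [hu, map_mul, Quaternion.normSq_star, hw, hw', mul_one]
      rw [Quaternion.normSq_def'] at hnsq
      rw [hc.1, hc.2] at hnsq
      linarith [hnsq]
    obtain ⟨θ, hcos, hsin⟩ : ∃ θ : ℝ, Real.cos θ = u.re ∧ Real.sin θ = u.imI := by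
      have hz : ‖(⟨u.re, u.imI⟩ : ℂ)‖ = 1 := by
        rw [Complex.norm_def, Complex.normSq_mk,
          show u.re * u.re + u.imI * u.imI = 1 by nlinarith, Real.sqrt_one]
      have hz0 : (⟨u.re, u.imI⟩ : ℂ) ≠ 0 := by
        intro h0
        rw [h0] at hz
        simp at hz
      refine ⟨Complex.arg ⟨u.re, u.imI⟩, ?_, ?_⟩
      · rw [Complex.cos_arg hz0, hz]; simp
      · rw [Complex.sin_arg, hz]; simp
    refine ⟨θ, ?_⟩
    have hue : u = (Real.cos θ : ℍ[ℝ]) + Real.sin θ • qi := by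
      ext <;> simp [(show qi.re = 0 from rfl), (show qi.imI = 1 from rfl), (show qi.imJ = 0 from rfl), (show qi.imK = 0 from rfl), hcos, hsin, hc.1, hc.2]
    calc w' = u * w := by rw [hu, mul_assoc, hsw, mul_one]
      _ = ((Real.cos θ : ℍ[ℝ]) + Real.sin θ • qi) * w := by rw [hue]
  · rintro ⟨θ, rfl⟩
    have h1 : Real.cos θ ^ 2 + Real.sin θ ^ 2 = 1 := by
      rw [add_comm]; exact Real.sin_sq_add_cos_sq θ
    have key : (star ((Real.cos θ : ℍ[ℝ]) + Real.sin θ • qi)) * qi *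
        ((Real.cos θ : ℍ[ℝ]) + Real.sin θ • qi) = qi := by
      ext <;> simp [(show qi.re = 0 from rfl), (show qi.imI = 1 from rfl), (show qi.imJ = 0 from rfl), (show qi.imK = 0 from rfl), Quaternion.re_mul, Quaternion.imI_mul, Quaternion.imJ_mul,
        Quaternion.imK_mul] <;> nlinarith [h1]
    rw [star_mul]
    rw [show star w * star ((Real.cos θ : ℍ[ℝ]) + Real.sin θ • qi) * qi *
        (((Real.cos θ : ℍ[ℝ]) + Real.sin θ • qi) * w)
        = star w * ((star ((Real.cos θ : ℍ[ℝ]) + Real.sin θ • qi)) * qi *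
        ((Real.cos θ : ℍ[ℝ]) + Real.sin θ • qi) * w) by simp only [mul_assoc], key]
    simp only [mul_assoc]
end
end

section
/- The Hopf map is surjective onto the unit sphere of imaginary quaternions: for every quaternion v with Re v = 0 and normSq v = 1, there exists a unit quaternion w such that conj(w) * i * w = v. -/
open Quaternion

noncomputable section

/-- The Hopf map is surjective onto the unit sphere of imaginary quaternions. -/
theorem hopf_surjective (v : ℍ[ℝ]) (hv_im : v.re = 0) (hv_norm : normSq v = 1) :
    ∃ w : ℍ[ℝ], normSq w = 1 ∧ star w * qi * w = v := by
  have hsv : star v = -v := by ext <;> simp [hv_im]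
  have hvv : v * v = -1 := by
    have h1 : v * star v = ((normSq v : ℝ) : ℍ[ℝ]) := Quaternion.self_mul_star v
    rw [hsv, hv_norm, mul_neg] at h1
    simpa using neg_eq_iff_eq_neg.mp h1
  have hqiqi : qi * qi = -1 := by
    ext <;> simp [Quaternion.re_mul, Quaternion.imI_mul,
      Quaternion.imJ_mul, Quaternion.imK_mul] <;> simp [qi]
  set u : ℍ[ℝ] := qi + v with hu
  have hsu : star u = -u := by
    have hsqi : star qi = -qi := by ext <;> simp <;> simp [qi]
    simp [hu, star_add, hsv, hsqi, add_comm]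
  have hkey : qi * u = u * v := by
    rw [hu, mul_add, add_mul, hqiqi, hvv, add_comm]
  have hmain : star u * qi * u = (normSq u : ℝ) • v := by
    rw [mul_assoc, hkey, ← mul_assoc, Quaternion.star_mul_self]
    simp [Algebra.smul_def]
  by_cases hn : normSq u = 0
  · have hu0 : u = 0 := Quaternion.normSq_eq_zero.mp hn
    have hv : v = -qi := eq_neg_of_add_eq_zero_right hu0
    refine ⟨⟨0, 0, 1, 0⟩, ?_, ?_⟩
    · erw [Quaternion.normSq_def']; norm_num
    · rw [hv]
      have key : ∀ w : ℍ[ℝ], w.re = 0 → w.imI = 0 → w.imJ = 1 → w.imK = 0 → star w * qi * w = -qi := by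
        intro w h1 h2 h3 h4
        ext <;> simp [Quaternion.re_mul, Quaternion.imI_mul,
          Quaternion.imJ_mul, Quaternion.imK_mul, h1, h2, h3, h4] <;> simp [qi]
      exact key _ rfl rfl rfl rfl
  · have hnpos : (0 : ℝ) < normSq u :=
      lt_of_le_of_ne (Quaternion.normSq_nonneg) (Ne.symm hn)
    set r : ℝ := (Real.sqrt (normSq u))⁻¹ with hr
    have hms : Real.sqrt (normSq u) * Real.sqrt (normSq u) = normSq u :=
      Real.mul_self_sqrt hnpos.le
    have hsqpos : (0 : ℝ) < Real.sqrt (normSq u) := Real.sqrt_pos.mpr hnpos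
    have hc : r * r * normSq u = 1 := by
      rw [hr, ← hms]; field_simp; rw [Real.sq_sqrt (sq_nonneg (Real.sqrt (normSq u)))]
    refine ⟨r • u, ?_, ?_⟩
    · rw [Quaternion.normSq_smul]
      nlinarith [hc]
    · simp only [Quaternion.star_smul, smul_mul_assoc, mul_smul_comm, smul_smul, hmain]
      rw [show r * (r * normSq u) = 1 by linarith [hc], one_smul]
end
end

section
/- Two pairs of unit quaternions define the same point of the configuration space M (i.e. the same isometry between Hopf fibers) exactly when they lie on one orbit of the diagonal circle action: for unit quaternions w₁, w₂, w₁', w₂', one has conj(w₁') * i * w₁' = conj(w₁) * i * w₁ and conj(w₁') * w₂' = conj(w₁) * w₂ if and only if there exists θ ∈ ℝ such that w₁' = (Real.cos θ + Real.sin θ • i) * w₁ and w₂' = (Real.cos θ + Real.sin θ • i) * w₂. -/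
open Quaternion

noncomputable section

@[simp] lemma qi_re : qi.re = 0 := rfl
@[simp] lemma qi_imI : qi.imI = 1 := rfl
@[simp] lemma qi_imJ : qi.imJ = 0 := rfl
@[simp] lemma qi_imK : qi.imK = 0 := rfl

lemma exists_cos_sin (a b : ℝ) (h : a ^ 2 + b ^ 2 = 1) :
    ∃ θ : ℝ, Real.cos θ = a ∧ Real.sin θ = b := by
  have ha : a ∈ Set.Icc (-1 : ℝ) 1 := by
    constructor <;> nlinarith [sq_nonneg b, sq_nonneg (a - 1), sq_nonneg (a + 1)]
  rcases le_or_gt 0 b with hb | hb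
  · refine ⟨Real.arccos a, Real.cos_arccos ha.1 ha.2, ?_⟩
    rw [Real.sin_arccos]
    have : (1 : ℝ) - a ^ 2 = b ^ 2 := by linarith
    rw [this, Real.sqrt_sq hb]
  · refine ⟨-Real.arccos a, by rw [Real.cos_neg]; exact Real.cos_arccos ha.1 ha.2, ?_⟩
    rw [Real.sin_neg, Real.sin_arccos]
    have : (1 : ℝ) - a ^ 2 = b ^ 2 := by linarith
    rw [this, Real.sqrt_sq_eq_abs, abs_of_neg hb, neg_neg]

/-- Two pairs of unit quaternions define the same point of the configuration space `M`
iff they lie on one orbit of the diagonal circle action. -/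
theorem configuration_space_circle_action (w₁ w₂ w₁' w₂' : ℍ[ℝ])
    (h₁ : normSq w₁ = 1) (h₂ : normSq w₂ = 1) (h₁' : normSq w₁' = 1) (h₂' : normSq w₂' = 1) :
    (star w₁' * qi * w₁' = star w₁ * qi * w₁ ∧ star w₁' * w₂' = star w₁ * w₂) ↔
    ∃ θ : ℝ, w₁' = ((Real.cos θ : ℍ[ℝ]) + Real.sin θ • qi) * w₁ ∧
             w₂' = ((Real.cos θ : ℍ[ℝ]) + Real.sin θ • qi) * w₂ := by
  have hs1 : star w₁ * w₁ = 1 := by rw [Quaternion.star_mul_self, h₁]; simp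
  have hs1' : w₁ * star w₁ = 1 := by rw [Quaternion.self_mul_star, h₁]; simp
  have hs2 : star w₁' * w₁' = 1 := by rw [Quaternion.star_mul_self, h₁']; simp
  have hs2' : w₁' * star w₁' = 1 := by rw [Quaternion.self_mul_star, h₁']; simp
  constructor
  · rintro ⟨hA, hB⟩
    set u : ℍ[ℝ] := w₁' * star w₁ with hu
    have hun : normSq u = 1 := by rw [hu, map_mul normSq _ _, normSq_star, h₁, h₁']; ring
    have hcomm : u * qi = qi * u := by
      have : star u * qi * u = qi := by
        rw [hu]
        calc (star (w₁' * star w₁)) * qi * (w₁' * star w₁)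
            = w₁ * (star w₁' * qi * w₁') * star w₁ := by
              simp [star_mul, mul_assoc]
          _ = w₁ * (star w₁ * qi * w₁) * star w₁ := by rw [hA]
          _ = qi := by
              rw [show w₁ * (star w₁ * qi * w₁) * star w₁
                  = (w₁ * star w₁) * qi * (w₁ * star w₁) by simp [mul_assoc]]
              rw [hs1']; simp
      calc u * qi = u * (star u * qi * u) := by rw [this]
        _ = (u * star u) * qi * u := by simp [mul_assoc]
        _ = qi * u := by
            rw [Quaternion.self_mul_star, hun]; simp
    have hc : u.imJ = 0 ∧ u.imK = 0 := by
      have h1 := congrArg QuaternionAlgebra.imJ hcomm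
      have h2 := congrArg QuaternionAlgebra.imK hcomm
      simp [Quaternion.imJ_mul, Quaternion.imK_mul] at h1 h2
      constructor <;> linarith
    have hsq : u.re ^ 2 + u.imI ^ 2 = 1 := by
      have := hun
      rw [Quaternion.normSq_def'] at this
      rw [hc.1, hc.2] at this
      nlinarith
    obtain ⟨θ, hcθ, hsθ⟩ := exists_cos_sin u.re u.imI hsq
    have hueq : u = (Real.cos θ : ℍ[ℝ]) + Real.sin θ • qi := by
      ext <;> simp [hcθ, hsθ, hc.1, hc.2, Quaternion.re_smul]
    refine ⟨θ, ?_, ?_⟩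
    · rw [← hueq, hu, mul_assoc, hs1, mul_one]
    · have : w₂' = w₁' * (star w₁ * w₂) := by
        rw [← hB, ← mul_assoc, hs2', one_mul]
      rw [this, ← hueq, hu, mul_assoc]
  · rintro ⟨θ, hw1, hw2⟩
    have key : star ((Real.cos θ : ℍ[ℝ]) + Real.sin θ • qi) *
        ((Real.cos θ : ℍ[ℝ]) + Real.sin θ • qi) = 1 := by
      ext <;> simp [Quaternion.re_mul, Quaternion.imI_mul, Quaternion.imJ_mul,
        Quaternion.imK_mul, Quaternion.re_smul] <;> nlinarith [Real.sin_sq_add_cos_sq θ]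
    have key2 : star ((Real.cos θ : ℍ[ℝ]) + Real.sin θ • qi) * qi *
        ((Real.cos θ : ℍ[ℝ]) + Real.sin θ • qi) = qi := by
      ext <;> simp [Quaternion.re_mul, Quaternion.imI_mul, Quaternion.imJ_mul,
        Quaternion.imK_mul, Quaternion.re_smul] <;> nlinarith [Real.sin_sq_add_cos_sq θ]
    constructor
    · rw [hw1, star_mul, show star w₁ * star ((Real.cos θ : ℍ[ℝ]) + Real.sin θ • qi) * qi *
        (((Real.cos θ : ℍ[ℝ]) + Real.sin θ • qi) * w₁)
        = star w₁ * (star ((Real.cos θ : ℍ[ℝ]) + Real.sin θ • qi) * qi *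
          ((Real.cos θ : ℍ[ℝ]) + Real.sin θ • qi)) * w₁ by simp [mul_assoc], key2]
    · rw [hw1, hw2, star_mul, show star w₁ * star ((Real.cos θ : ℍ[ℝ]) + Real.sin θ • qi) *
        (((Real.cos θ : ℍ[ℝ]) + Real.sin θ • qi) * w₂)
        = star w₁ * (star ((Real.cos θ : ℍ[ℝ]) + Real.sin θ • qi) *
          ((Real.cos θ : ℍ[ℝ]) + Real.sin θ • qi)) * w₂ by simp [mul_assoc], key, mul_one]
end
end

section
/- For every nonzero x ∈ ℍ × ℍ with x ⊛ x = 0, the space of imaginary divisors of zero annihilated by x, namely Δ_x = {y ∈ ℍ × ℍ : Re (y.1) = 0 and x ⊛ y = 0}, is a real vector subspace of ℍ × ℍ of dimension 3. -/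
open Quaternion

noncomputable section

/-- The split-octonion product on `ℍ × ℍ`: `(a,b) ⊛ (c,d) = (a*c + d*conj b, conj a * d + c*b)`. -/
def omul (x y : ℍ[ℝ] × ℍ[ℝ]) : ℍ[ℝ] × ℍ[ℝ] :=
  (x.1 * y.1 + y.2 * star x.2, star x.1 * y.2 + y.1 * x.2)

/-- For every nonzero square-zero split-octonion `x`, the set
`Δ_x = {y : Re y.1 = 0, x ⊛ y = 0}` of imaginary divisors of zero annihilated by `x`
is a real vector subspace of dimension 3. -/
theorem annihilator_is_three_dimensional (x : ℍ[ℝ] × ℍ[ℝ]) (hx : x ≠ 0)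
    (hxx : omul x x = 0) :
    ∃ S : Submodule ℝ (ℍ[ℝ] × ℍ[ℝ]),
      (S : Set (ℍ[ℝ] × ℍ[ℝ])) = {y | y.1.re = 0 ∧ omul x y = 0} ∧
      Module.finrank ℝ S = 3 := by
  have h1 : x.1 * x.1 + x.2 * star x.2 = 0 := congrArg Prod.fst hxx
  have h2 : star x.1 * x.2 + x.1 * x.2 = 0 := congrArg Prod.snd hxx
  have hb : x.2 ≠ 0 := by
    intro hb0
    apply hx
    have : x.1 * x.1 = 0 := by simpa [hb0] using h1
    have h1z : x.1 = 0 := by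
      rcases mul_eq_zero.mp this with h | h <;> exact h
    exact Prod.ext h1z hb0
  have hre : x.1.re = 0 := by
    have : (star x.1 + x.1) * x.2 = 0 := by rw [add_mul]; exact h2
    have hsum : star x.1 + x.1 = 0 := by
      rcases mul_eq_zero.mp this with h | h
      · exact h
      · exact absurd h hb
    have := congrArg QuaternionAlgebra.re hsum
    simp at this
    linarith [this]
  have hstar : star x.1 = -x.1 := by
    ext <;> simp [hre]
  have haa : x.1 * x.1 = -((normSq x.2 : ℝ) : ℍ[ℝ]) := by
    have := eq_neg_of_add_eq_zero_left h1
    rwa [Quaternion.self_mul_star] at this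
  have hnb : normSq x.2 ≠ 0 := by simpa using hb
  -- the linear map c ↦ (c, -(normSq x.2)⁻¹ • (x.1 * c * x.2))
  set g : ℍ[ℝ] →ₗ[ℝ] ℍ[ℝ] :=
    (-(normSq x.2)⁻¹) • ((LinearMap.mulRight ℝ x.2).comp (LinearMap.mulLeft ℝ x.1)) with hg
  set f : ℍ[ℝ] →ₗ[ℝ] ℍ[ℝ] × ℍ[ℝ] := LinearMap.prod LinearMap.id g with hf
  have hfc : ∀ c, f c = (c, (-(normSq x.2)⁻¹) • (x.1 * c * x.2)) := fun c => rfl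
  have hfinj : Function.Injective f := fun c d h => congrArg Prod.fst h
  set K : Submodule ℝ ℍ[ℝ] := LinearMap.ker (QuaternionAlgebra.reₗ (-1 : ℝ) (0 : ℝ) (-1 : ℝ)) with hK
  refine ⟨Submodule.map f K, ?_, ?_⟩
  · ext y
    simp only [SetLike.mem_coe, Submodule.mem_map, Set.mem_setOf_eq, hK,
      LinearMap.mem_ker, QuaternionAlgebra.reₗ_apply]
    constructor
    · rintro ⟨c, hc, rfl⟩
      refine ⟨hc, ?_⟩
      have : omul x (f c) = 0 := by
        rw [hfc]
        unfold omul
        apply Prod.ext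
        · show x.1 * c + ((-(normSq x.2)⁻¹) • (x.1 * c * x.2)) * star x.2 = 0
          rw [smul_mul_assoc, mul_assoc, Quaternion.self_mul_star,
            Quaternion.mul_coe_eq_smul, smul_smul]
          rw [neg_mul, inv_mul_cancel₀ hnb]
          simp
        · show star x.1 * ((-(normSq x.2)⁻¹) • (x.1 * c * x.2)) + c * x.2 = 0
          rw [hstar, mul_smul_comm]
          have key : -x.1 * (x.1 * c * x.2) = (normSq x.2 : ℝ) • (c * x.2) := by
            have : -x.1 * (x.1 * c * x.2) = -(x.1 * x.1) * (c * x.2) := by noncomm_ring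
            rw [this, haa, neg_neg, Quaternion.coe_mul_eq_smul]
          rw [key, smul_smul, neg_mul, inv_mul_cancel₀ hnb]
          simp
      simpa using this
    · rintro ⟨hc, hy⟩
      refine ⟨y.1, hc, ?_⟩
      have e1 : x.1 * y.1 + y.2 * star x.2 = 0 := congrArg Prod.fst hy
      have e2 : y.2 * star x.2 = -(x.1 * y.1) := eq_neg_of_add_eq_zero_right e1
      have e3 : y.2 * (star x.2 * x.2) = -(x.1 * y.1 * x.2) := by
        rw [← mul_assoc, e2, neg_mul]
      rw [Quaternion.star_mul_self, Quaternion.mul_coe_eq_smul] at e3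
      have e4 : y.2 = (-(normSq x.2)⁻¹) • (x.1 * y.1 * x.2) := by
        have := congrArg (fun q => (normSq x.2)⁻¹ • q) e3
        simpa [smul_smul, inv_mul_cancel₀ hnb] using this
      rw [hfc]
      exact Prod.ext rfl e4.symm
  · have : Module.finrank ℝ (Submodule.map f K) = Module.finrank ℝ K :=
      (Submodule.equivMapOfInjective f hfinj K).finrank_eq.symm
    rw [this]
    have hsurj : Function.Surjective (QuaternionAlgebra.reₗ (-1 : ℝ) (0 : ℝ) (-1 : ℝ)) := by
      intro r; exact ⟨(r : ℍ[ℝ]), rfl⟩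
    have hrn := LinearMap.finrank_range_add_finrank_ker (QuaternionAlgebra.reₗ (-1 : ℝ) (0 : ℝ) (-1 : ℝ))
    rw [LinearMap.range_eq_top.mpr hsurj, finrank_top, QuaternionAlgebra.finrank_eq_four,
      Module.finrank_self] at hrn
    have hk3 : Module.finrank ℝ (LinearMap.ker (QuaternionAlgebra.reₗ (-1:ℝ) (0:ℝ) (-1:ℝ))) = 3 := by
      omega
    rw [hK]
    exact hk3
end
end

section
/- Let v be a quaternion with Re v = 0 and normSq v = 1. Then the image of the linear map w ↦ w + v*w*v on ℍ is exactly the set {u ∈ ℍ : Re u = 0 and Re (v*u) = 0}. -/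
open Quaternion

noncomputable section

/-- For a unit imaginary quaternion `v`, the image of `w ↦ w + v*w*v` is exactly the set
of imaginary quaternions `u` with `v*u` also imaginary. -/
theorem range_of_reflection_map (v : ℍ[ℝ]) (hv_im : v.re = 0) (hv : normSq v = 1) :
    Set.range (fun w : ℍ[ℝ] => w + v * w * v) =
    {u : ℍ[ℝ] | u.re = 0 ∧ (v * u).re = 0} := by
  have hv' : v.imI ^ 2 + v.imJ ^ 2 + v.imK ^ 2 = 1 := by
    have := hv
    rw [Quaternion.normSq_def', hv_im] at this
    nlinarith [this]
  ext u
  simp only [Set.mem_range, Set.mem_setOf_eq]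
  constructor
  · rintro ⟨w, rfl⟩
    constructor
    · simp only [Quaternion.re_add, Quaternion.imI_add, Quaternion.imJ_add,
        Quaternion.imK_add, Quaternion.re_mul, Quaternion.imI_mul, Quaternion.imJ_mul,
        Quaternion.imK_mul, hv_im]
      linear_combination (-w.re) * hv'
    · simp only [Quaternion.re_add, Quaternion.imI_add, Quaternion.imJ_add,
        Quaternion.imK_add, Quaternion.re_mul, Quaternion.imI_mul, Quaternion.imJ_mul,
        Quaternion.imK_mul, hv_im]
      linear_combination (v.imI * w.imI + v.imJ * w.imJ + v.imK * w.imK) * hv'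
  · rintro ⟨h1, h2⟩
    rw [Quaternion.re_mul, hv_im, h1] at h2
    refine ⟨(1 / 2 : ℝ) • u, ?_⟩
    have h2' : v.imI * u.imI + v.imJ * u.imJ + v.imK * u.imK = 0 := by linarith
    ext <;>
      simp only [Quaternion.re_add, Quaternion.imI_add, Quaternion.imJ_add,
        Quaternion.imK_add, Quaternion.re_mul, Quaternion.imI_mul, Quaternion.imJ_mul,
        Quaternion.imK_mul, Quaternion.re_smul, Quaternion.imI_smul, Quaternion.imJ_smul,
        Quaternion.imK_smul, smul_eq_mul, hv_im, h1]
    · ring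
    · linear_combination (u.imI / 2) * hv' - v.imI * h2'
    · linear_combination (u.imJ / 2) * hv' - v.imJ * h2'
    · linear_combination (u.imK / 2) * hv' - v.imK * h2'
end
end

section
/- Core identity in the proof of Proposition 1 (Φ(x) ⊛ (D_xΦ y) = 0): let w₁, w₂ be unit quaternions and let z = a + b • i with a, b ∈ ℝ. Then (conj(w₁) * i * w₁, conj(w₁) * w₂) ⊛ (conj(w₁) * z * k * w₁, conj(w₁) * z * j * w₂) = (0, 0). -/
open Quaternion

noncomputable section

/-- The quaternion imaginary unit `j`. -/
def qj : ℍ[ℝ] := ⟨0, 0, 1, 0⟩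

/-- The quaternion imaginary unit `k`. -/
def qk : ℍ[ℝ] := ⟨0, 0, 0, 1⟩

set_option maxHeartbeats 1600000 in
/-- Core identity in the proof of Proposition 1: `Φ(x) ⊛ (D_xΦ y) = 0`. -/
theorem phi_image_annihilates_differential (w₁ w₂ : ℍ[ℝ])
    (h₁ : normSq w₁ = 1) (h₂ : normSq w₂ = 1) (a b : ℝ) :
    omul (star w₁ * qi * w₁, star w₁ * w₂)
         (star w₁ * ((a : ℍ[ℝ]) + b • qi) * qk * w₁,
          star w₁ * ((a : ℍ[ℝ]) + b • qi) * qj * w₂) = (0, 0) := by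
  set z : ℍ[ℝ] := (a : ℍ[ℝ]) + b • qi with hz
  have hw1 : w₁ * star w₁ = 1 := by
    rw [Quaternion.self_mul_star, h₁]; norm_num
  have hw2 : w₂ * star w₂ = 1 := by
    rw [Quaternion.self_mul_star, h₂]; norm_num
  have e1 : qi * z * qk + z * qj = 0 := by
    simp only [hz]
    ext <;> simp <;> simp [qi, qj, qk]
  have e2 : -(qi * (z * qj)) + z * qk = 0 := by
    simp only [hz]
    ext <;> simp <;> simp [qi, qj, qk]
  simp only [omul, Prod.mk.injEq]
  constructor
  · have : star w₁ * qi * w₁ * (star w₁ * z * qk * w₁) + star w₁ * z * qj * w₂ * star (star w₁ * w₂)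
        = star w₁ * (qi * z * qk + z * qj) * w₁ := by
      rw [star_mul, star_star]
      calc star w₁ * qi * w₁ * (star w₁ * z * qk * w₁) + star w₁ * z * qj * w₂ * (star w₂ * w₁)
          = star w₁ * qi * (w₁ * star w₁) * z * qk * w₁ + star w₁ * z * qj * (w₂ * star w₂) * w₁ := by
            noncomm_ring
        _ = star w₁ * (qi * z * qk + z * qj) * w₁ := by rw [hw1, hw2]; noncomm_ring
    rw [this, e1]; noncomm_ring
  · have : star (star w₁ * qi * w₁) * (star w₁ * z * qj * w₂) + star w₁ * z * qk * w₁ * (star w₁ * w₂)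
        = star w₁ * (-(qi * (z * qj)) + z * qk) * w₂ := by
      simp only [star_mul, star_star]
      have hsi : star qi = -qi := by ext <;> simp <;> simp [qi]
      rw [hsi]
      calc star w₁ * (-qi * w₁) * (star w₁ * z * qj * w₂) + star w₁ * z * qk * w₁ * (star w₁ * w₂)
          = star w₁ * -qi * (w₁ * star w₁) * (z * qj) * w₂ + star w₁ * (z * qk) * (w₁ * star w₁) * w₂ := by
            noncomm_ring
        _ = star w₁ * (-(qi * (z * qj)) + z * qk) * w₂ := by rw [hw1]; noncomm_ring
    rw [this, e2]; noncomm_ring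
end
end

section
/- Differential of the map Φ along the ratio-3 rolling distribution: let w₁, w₂ be unit quaternions and z = a + b • i with a, b ∈ ℝ. Then the curve t ↦ ((w₁ + t • (z*j*w₁))⁻¹ * i * (w₁ + t • (z*j*w₁)), (w₁ + t • (z*j*w₁))⁻¹ * (w₂ + (3*t) • (z*j*w₂))) in ℍ × ℍ has derivative at t = 0 equal to (2 • (conj(w₁) * z * k * w₁), 2 • (conj(w₁) * z * j * w₂)). (Thus Φ(w₁ + ℓ w₂) = w₁⁻¹ i w₁ + ℓ (w₁⁻¹ w₂) carries the no-slipping-no-twisting distribution D³ for balls with radii in ratio 3:1 into the divisors-of-zero distribution.) -/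
open Quaternion

noncomputable section

set_option maxHeartbeats 1000000 in
/-- Differential at `t = 0` of the map `Φ` along the ratio-3 rolling distribution:
the curve `t ↦ (g(t)⁻¹ i g(t), g(t)⁻¹ (w₂ + 3t z j w₂))`, with `g(t) = w₁ + t z j w₁`,
has derivative `(2 conj(w₁) z k w₁, 2 conj(w₁) z j w₂)` at `t = 0`. -/
theorem phi_derivative_along_distribution (w₁ w₂ : ℍ[ℝ])
    (h₁ : normSq w₁ = 1) (h₂ : normSq w₂ = 1) (a b : ℝ) :
    HasDerivAt
      (fun t : ℝ =>
        (((w₁ + t • (((a : ℍ[ℝ]) + b • qi) * qj * w₁))⁻¹ * qi *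
            (w₁ + t • (((a : ℍ[ℝ]) + b • qi) * qj * w₁)),
          (w₁ + t • (((a : ℍ[ℝ]) + b • qi) * qj * w₁))⁻¹ *
            (w₂ + (3 * t) • (((a : ℍ[ℝ]) + b • qi) * qj * w₂))) : ℍ[ℝ] × ℍ[ℝ]))
      ((2 • (star w₁ * ((a : ℍ[ℝ]) + b • qi) * qk * w₁),
        2 • (star w₁ * ((a : ℍ[ℝ]) + b • qi) * qj * w₂)) : ℍ[ℝ] × ℍ[ℝ])
      0 := by
  set z : ℍ[ℝ] := (a : ℍ[ℝ]) + b • qi with hz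
  have hw₁ : w₁ ≠ 0 := by
    intro h; rw [h] at h₁; simp at h₁
  have hws : w₁ * star w₁ = 1 := by
    rw [Quaternion.self_mul_star, h₁]; simp
  have hinv : w₁⁻¹ = star w₁ := inv_eq_of_mul_eq_one_right hws
  have hws' : ∀ x : ℍ[ℝ], w₁ * (star w₁ * x) = x := fun x => by
    rw [← mul_assoc, hws, one_mul]
  have hiz : ∀ x : ℍ[ℝ], qi * (z * x) = z * (qi * x) := fun x => by
    rw [← mul_assoc, ← mul_assoc]
    congr 1
    ext <;> simp [hz, Quaternion.re_mul, Quaternion.imI_mul, Quaternion.imJ_mul, Quaternion.imK_mul] <;> simp [qi]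
  have hij : ∀ x : ℍ[ℝ], qi * (qj * x) = qk * x := fun x => by
    rw [← mul_assoc]
    congr 1
    ext <;> simp [Quaternion.re_mul, Quaternion.imI_mul, Quaternion.imJ_mul, Quaternion.imK_mul] <;> simp [qi, qj, qk]
  have hji : ∀ x : ℍ[ℝ], qj * (qi * x) = -(qk * x) := fun x => by
    rw [← mul_assoc, ← neg_mul]
    congr 1
    ext <;> simp [Quaternion.re_mul, Quaternion.imI_mul, Quaternion.imJ_mul, Quaternion.imK_mul] <;> simp [qi, qj, qk]
  -- the curve g and its inverse
  have hg : HasDerivAt (fun t : ℝ => w₁ + t • (z * qj * w₁)) (z * qj * w₁) 0 := by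
    simpa using ((hasDerivAt_id (0:ℝ)).smul_const (z * qj * w₁)).const_add w₁
  have hginv : HasDerivAt (fun t : ℝ => (w₁ + t • (z * qj * w₁))⁻¹)
      (-(w₁⁻¹ * (z * qj * w₁) * w₁⁻¹)) 0 := by
    have hfd : HasFDerivAt Inv.inv
        (-(ContinuousLinearMap.mulLeftRight ℝ ℍ[ℝ] w₁⁻¹) w₁⁻¹)
        ((fun t : ℝ => w₁ + t • (z * qj * w₁)) 0) := by
      simpa using hasFDerivAt_inv' (𝕜 := ℝ) hw₁
    exact (hfd.comp_hasDerivAt 0 hg).congr_deriv (by simp)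
  have hc2 : HasDerivAt (fun t : ℝ => w₂ + (3 * t) • (z * qj * w₂)) ((3:ℝ) • (z * qj * w₂)) 0 := by
    simpa using
      (((hasDerivAt_id (0:ℝ)).const_mul (3:ℝ)).smul_const (z * qj * w₂)).const_add w₂
  have hf₁ : HasDerivAt (fun t : ℝ =>
      (w₁ + t • (z * qj * w₁))⁻¹ * qi * (w₁ + t • (z * qj * w₁)))
      (2 • (star w₁ * z * qk * w₁)) 0 := by
    have h := ((hginv.mul_const qi).mul hg)
    simp only [zero_smul, add_zero, mul_zero, hinv] at h
    refine h.congr_deriv ?_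
    symm
    simp only [two_smul, neg_mul, mul_assoc, neg_add_eq_sub, mul_neg]
    rw [hws', hji, hiz, hij]
    simp [mul_neg]
  have hf₂ : HasDerivAt (fun t : ℝ =>
      (w₁ + t • (z * qj * w₁))⁻¹ * (w₂ + (3 * t) • (z * qj * w₂)))
      (2 • (star w₁ * z * qj * w₂)) 0 := by
    have h := hginv.mul hc2
    simp only [zero_smul, add_zero, mul_zero, mul_smul_comm, hinv] at h
    refine h.congr_deriv ?_
    symm
    simp only [two_smul, neg_mul, mul_assoc, mul_neg]
    rw [hws']
    have h3 : (3:ℝ) • (star w₁ * (z * (qj * w₂))) =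
        star w₁ * (z * (qj * w₂)) + star w₁ * (z * (qj * w₂)) + star w₁ * (z * (qj * w₂)) := by
      rw [show (3:ℝ) = 1 + 1 + 1 by norm_num]
      simp [add_smul]
    rw [h3]
    abel
  simpa using hf₁.prodMk hf₂
end
end
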